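/- Let A, B be symmetric positive definite matrices with B ≤ A ≤ B + C for a symmetric positive semidefinite C (in the Loewner order). If additionally A ≤ L for a symmetric positive definite L, then the damped iteration matrix I − τ L⁻¹ A with τ = 1 satisfies ‖A^{1/2}(I − L⁻¹A)^ν A^{−1/2}‖ ≤ 1 for every ν ∈ ℕ. -/

import Mathlib

open Matrix

lemma key_step {n : ℕ} (A L : Matrix (Fin n) (Fin n) ℝ)
    (hA : A.IsHermitian) (hL : L.PosDef) (hAL : (L - A).PosSemidef)
    (x : Fin n → ℝ) :
    ((1 - L⁻¹ * A) *ᵥ x) ⬝ᵥ (A *ᵥ ((1 - L⁻¹ * A) *ᵥ x)) ≤ x ⬝ᵥ (A *ᵥ x) := by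
  set z : Fin n → ℝ := L⁻¹ *ᵥ (A *ᵥ x) with hz
  have hEx : (1 - L⁻¹ * A) *ᵥ x = x - z := by
    simp [sub_mulVec, hz, ← mulVec_mulVec]
  have hLz : L *ᵥ z = A *ᵥ x := by
    rw [hz, mulVec_mulVec,
      Matrix.mul_nonsing_inv _ (isUnit_iff_ne_zero.mpr hL.det_pos.ne'), one_mulVec]
  have hsym : x ⬝ᵥ (A *ᵥ z) = (A *ᵥ x) ⬝ᵥ z := by
    have hAt : Aᵀ = A := by simpa using hA.eq
    rw [dotProduct_mulVec, ← mulVec_transpose, hAt]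
  have h1 : 0 ≤ z ⬝ᵥ (L *ᵥ z) := by
    have := hL.posSemidef.dotProduct_mulVec_nonneg z
    simpa using this
  have h2 : 0 ≤ z ⬝ᵥ ((L - A) *ᵥ z) := by
    have := hAL.dotProduct_mulVec_nonneg z
    simpa using this
  have h2' : z ⬝ᵥ ((L - A) *ᵥ z) = z ⬝ᵥ (L *ᵥ z) - z ⬝ᵥ (A *ᵥ z) := by
    rw [sub_mulVec, dotProduct_sub]
  have hcross : z ⬝ᵥ (A *ᵥ x) = z ⬝ᵥ (L *ᵥ z) := by rw [hLz]
  have hsym2 : (A *ᵥ x) ⬝ᵥ z = z ⬝ᵥ (A *ᵥ x) := dotProduct_comm _ _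
  rw [hEx, mulVec_sub, dotProduct_sub, sub_dotProduct, sub_dotProduct]
  linarith [h1, h2, h2', hsym, hcross, hsym2]

/-- Stability of the damped (τ = 1) smoothing iteration: if `B ≤ A ≤ B + C` with
`C ⪰ 0`, and `A ≤ L` in the Loewner order, then `I − L⁻¹A` is a contraction in the
`A`-norm, i.e. `‖A^{1/2}(I − L⁻¹A)^ν A^{−1/2}‖ ≤ 1` for every `ν`, expressed
equivalently through the quadratic form of `A`. -/
theorem stmt_6 {n : ℕ} (A B C L : Matrix (Fin n) (Fin n) ℝ)
    (hA : A.PosDef) (hB : B.PosDef) (hC : C.PosSemidef) (hL : L.PosDef)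
    (hBA : (A - B).PosSemidef) (hABC : ((B + C) - A).PosSemidef)
    (hAL : (L - A).PosSemidef) (ν : ℕ) :
    ∀ x : Fin n → ℝ,
      (((1 - L⁻¹ * A) ^ ν) *ᵥ x) ⬝ᵥ (A *ᵥ (((1 - L⁻¹ * A) ^ ν) *ᵥ x))
        ≤ x ⬝ᵥ (A *ᵥ x) := by
  induction ν with
  | zero => intro x; simp
  | succ k ih =>
    intro x
    have hpow : (1 - L⁻¹ * A) ^ (k + 1) *ᵥ x
        = ((1 - L⁻¹ * A) ^ k) *ᵥ ((1 - L⁻¹ * A) *ᵥ x) := by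
      rw [mulVec_mulVec, ← pow_succ]
    rw [hpow]
    exact le_trans (ih ((1 - L⁻¹ * A) *ᵥ x)) (key_step A L hA.1 hL hAL x)
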